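/- Greedy bag-filling correctness (condition set 1): Let v be an additive valuation with v(M) ≥ n, let B_1,...,B_n be disjoint bundles with v(B_k) ≤ 1 for all k, containing all items whose absolute value is at least ε, and suppose every remaining item has |v(j)| < ε. Then the following procedure yields a partition A_1,...,A_n of M with v(A_k) ≥ 1 − ε for all k: for k = 1,...,n−1, while v(B_k) < 1−ε add to B_k the unallocated small item of minimum value; finally add all remaining small items to B_n. Moreover each of A_1,...,A_{n−1} has value at most 1. -/

import Mathlib

open Finset
open scoped Classical

/-- `A` is a partition of the item set `M` into `n` (possibly empty) bundles. -/
def IsPartition {ι : Type*} [DecidableEq ι] (M : Finset ι) (n : ℕ)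
    (A : Fin n → Finset ι) : Prop :=
  (∀ k, A k ⊆ M) ∧ (∀ k l, k ≠ l → Disjoint (A k) (A l)) ∧ (∀ j ∈ M, ∃ k, j ∈ A k)

/-- `μ` is the maximin share of the additive valuation `v` over `M` with `n` bundles:
some partition attains minimum bundle value at least `μ`, and every partition has a
bundle of value at most `μ`. -/
def IsMMS {ι : Type*} [DecidableEq ι] (v : ι → ℝ) (M : Finset ι) (n : ℕ) (μ : ℝ) : Prop :=
  (∃ A : Fin n → Finset ι, IsPartition M n A ∧ ∀ k, μ ≤ ∑ j ∈ A k, v j) ∧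
  (∀ A : Fin n → Finset ι, IsPartition M n A → ∃ k, ∑ j ∈ A k, v j ≤ μ)


private lemma fill_lemma {ι : Type*} [DecidableEq ι] (v : ι → ℝ) (ε : ℝ) :
    ∀ (S : Finset ι), (∀ j ∈ S, v j < ε) → ∀ b : ℝ, b ≤ 1 →
    (∃ T ⊆ S, 1 - ε ≤ b + ∑ j ∈ T, v j ∧ b + ∑ j ∈ T, v j ≤ 1) ∨
      b + ∑ j ∈ S, v j < 1 - ε := by
  intro S
  induction S using Finset.induction_on with
  | empty =>
    intro _ b hb
    by_cases h : 1 - ε ≤ b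
    · exact Or.inl ⟨∅, Finset.Subset.refl _, by simp; linarith, by simp; linarith⟩
    · exact Or.inr (by simpa using lt_of_not_ge h)
  | @insert x S hx ih =>
    intro hS b hb
    by_cases h : 1 - ε ≤ b
    · exact Or.inl ⟨∅, empty_subset _, by simp; linarith, by simp; linarith⟩
    · have hvx : v x < ε := hS x (mem_insert_self _ _)
      have hblt : b < 1 - ε := lt_of_not_ge h
      have hb' : b + v x ≤ 1 := by linarith
      rcases ih (fun j hj => hS j (mem_insert_of_mem hj)) (b + v x) hb' with
        ⟨T, hT, h1, h2⟩ | hr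
      · left
        have hxT : x ∉ T := fun hxT => hx (hT hxT)
        refine ⟨insert x T, insert_subset_insert _ hT, ?_, ?_⟩
        · rw [Finset.sum_insert hxT]; linarith
        · rw [Finset.sum_insert hxT]; linarith
      · right
        rw [Finset.sum_insert hx]; linarith

private lemma bag_aux {ι : Type*} [DecidableEq ι] (v : ι → ℝ) (ε : ℝ) (hε : 0 < ε) (hε1 : ε < 1) :
    ∀ n, 1 ≤ n → ∀ (M : Finset ι) (B : Fin n → Finset ι),
    (∀ k, B k ⊆ M) → (∀ k l, k ≠ l → Disjoint (B k) (B l)) →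
    (∀ k, ∑ j ∈ B k, v j ≤ 1) →
    (∀ j ∈ M, (∀ k, j ∉ B k) → |v j| < ε) →
    ((n : ℝ) ≤ ∑ j ∈ M, v j) →
    ∃ A : Fin n → Finset ι, IsPartition M n A ∧ (∀ k, B k ⊆ A k) ∧
      (∀ k, 1 - ε ≤ ∑ j ∈ A k, v j) ∧
      (∀ k : Fin n, (k : ℕ) + 1 < n → ∑ j ∈ A k, v j ≤ 1) := by
  intro n
  induction n with
  | zero => omega
  | succ m ih =>
    intro _ M B hBsub hBdisj hBval hsmall htot
    rcases Nat.eq_zero_or_pos m with hm | hm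
    · -- base case n = 1
      subst hm
      refine ⟨fun _ => M, ⟨fun _ => Finset.Subset.refl _, ?_, fun j hj => ⟨0, hj⟩⟩,
        fun k => hBsub k, fun k => ?_, fun k hk => by omega⟩
      · intro k l hkl
        exact absurd (Fin.ext (by have := k.isLt; have := l.isLt; omega)) hkl
      · have h1 : (1 : ℝ) ≤ ∑ j ∈ M, v j := by norm_num at htot; linarith
        linarith
    · -- inductive step
      set U : Finset ι := Finset.univ.biUnion B with hU
      have hUsub : U ⊆ M := Finset.biUnion_subset.mpr fun k _ => hBsub k
      set Sm : Finset ι := M \ U with hSm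
      have hSmall : ∀ j ∈ Sm, |v j| < ε := by
        intro j hj
        rw [hSm, Finset.mem_sdiff] at hj
        refine hsmall j hj.1 fun k hk => hj.2 ?_
        exact Finset.mem_biUnion.mpr ⟨k, Finset.mem_univ _, hk⟩
      set S : Finset ι := Sm.filter (fun j => 0 < v j) with hS
      have hSsm : S ⊆ Sm := Finset.filter_subset _ _
      have hSlt : ∀ j ∈ S, v j < ε := fun j hj =>
        lt_of_le_of_lt (le_abs_self _) (hSmall j (hSsm hj))
      -- split total sum
      have hsum_split : ∑ j ∈ M, v j = (∑ k, ∑ j ∈ B k, v j) + ∑ j ∈ Sm, v j := by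
        have h1 : ∑ j ∈ Sm, v j + ∑ j ∈ U, v j = ∑ j ∈ M, v j :=
          Finset.sum_sdiff hUsub
        have h2 : ∑ j ∈ U, v j = ∑ k, ∑ j ∈ B k, v j := by
          rw [hU]
          exact Finset.sum_biUnion (fun k _ l _ hkl => hBdisj k l hkl)
        linarith
      have hSmval : ∑ j ∈ Sm, v j ≤ ∑ j ∈ S, v j := by
        have hsplit2 := Finset.sum_filter_add_sum_filter_not Sm (fun j => 0 < v j) v
        have hneg : ∑ j ∈ Sm.filter (fun j => ¬ 0 < v j), v j ≤ 0 :=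
          Finset.sum_nonpos fun j hj => le_of_not_gt (Finset.mem_filter.mp hj).2
        rw [hS]
        linarith
      rcases fill_lemma v ε S hSlt (∑ j ∈ B 0, v j) (hBval 0) with ⟨T, hTS, hT1, hT2⟩ | hbad
      · -- success: build A
        have hTSm : T ⊆ Sm := hTS.trans hSsm
        have hTdisjB : ∀ k, Disjoint (B k) T := by
          intro k
          refine Finset.disjoint_left.mpr fun j hjB hjT => ?_
          have := hTSm hjT
          rw [hSm, Finset.mem_sdiff] at this
          exact this.2 (Finset.mem_biUnion.mpr ⟨k, Finset.mem_univ _, hjB⟩)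
        set A0 : Finset ι := B 0 ∪ T with hA0
        have hA0sub : A0 ⊆ M := Finset.union_subset (hBsub 0) (hTSm.trans (Finset.sdiff_subset))
        have hA0val : ∑ j ∈ A0, v j = ∑ j ∈ B 0, v j + ∑ j ∈ T, v j :=
          Finset.sum_union (hTdisjB 0)
        set M' : Finset ι := M \ A0 with hM'
        have htot' : (m : ℝ) ≤ ∑ j ∈ M', v j := by
          have : ∑ j ∈ M', v j = ∑ j ∈ M, v j - ∑ j ∈ A0, v j := by
            rw [hM', Finset.sum_sdiff_eq_sub hA0sub]
          rw [this, hA0val]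
          push_cast at htot ⊢
          linarith
        have hBsub' : ∀ k : Fin m, B k.succ ⊆ M' := by
          intro k
          rw [hM']
          intro j hj
          rw [Finset.mem_sdiff]
          refine ⟨hBsub _ hj, fun hjA => ?_⟩
          rcases Finset.mem_union.mp hjA with h0 | hT
          · exact Finset.disjoint_left.mp (hBdisj k.succ 0 (Fin.succ_ne_zero k)) hj h0
          · exact Finset.disjoint_left.mp (hTdisjB k.succ) hj hT
        have hsmall' : ∀ j ∈ M', (∀ k : Fin m, j ∉ B k.succ) → |v j| < ε := by
          intro j hj hjB
          rw [hM', Finset.mem_sdiff] at hj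
          refine hsmall j hj.1 fun k => ?_
          rcases eq_or_ne k 0 with rfl | hk0
          · exact fun h => hj.2 (Finset.mem_union_left _ h)
          · obtain ⟨k', rfl⟩ := Fin.eq_succ_of_ne_zero hk0
            exact hjB k'
        obtain ⟨A', ⟨hA'sub, hA'disj, hA'cov⟩, hA'B, hA'lo, hA'hi⟩ :=
          ih hm M' (fun k => B k.succ) hBsub'
            (fun k l hkl => hBdisj k.succ l.succ (fun h => hkl (Fin.succ_injective _ h)))
            (fun k => hBval k.succ) hsmall' htot'
        have hM'sub : M' ⊆ M := Finset.sdiff_subset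
        refine ⟨Fin.cases A0 A', ⟨?_, ?_, ?_⟩, ?_, ?_, ?_⟩
        · intro k
          induction k using Fin.cases with
          | zero => simpa using hA0sub
          | succ k => simpa using (hA'sub k).trans hM'sub
        · intro k l hkl
          induction k using Fin.cases with
          | zero =>
            induction l using Fin.cases with
            | zero => exact absurd rfl hkl
            | succ l =>
              simp only [Fin.cases_zero, Fin.cases_succ]
              refine Finset.disjoint_left.mpr fun j hj0 hjl => ?_
              have := hA'sub l hjl
              rw [hM', Finset.mem_sdiff] at this
              exact this.2 hj0
          | succ k =>
            induction l using Fin.cases with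
            | zero =>
              simp only [Fin.cases_zero, Fin.cases_succ]
              refine Finset.disjoint_right.mpr fun j hj0 hjl => ?_
              have := hA'sub k hjl
              rw [hM', Finset.mem_sdiff] at this
              exact this.2 hj0
            | succ l =>
              simp only [Fin.cases_succ]
              exact hA'disj k l (fun h => hkl (by rw [h]))
        · intro j hj
          by_cases hjA : j ∈ A0
          · exact ⟨0, by simpa using hjA⟩
          · have hjM' : j ∈ M' := by rw [hM', Finset.mem_sdiff]; exact ⟨hj, hjA⟩
            obtain ⟨k, hk⟩ := hA'cov j hjM'
            exact ⟨k.succ, by simpa using hk⟩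
        · intro k
          induction k using Fin.cases with
          | zero =>
            simp only [Fin.cases_zero, hA0]
            exact Finset.subset_union_left
          | succ k => simpa using hA'B k
        · intro k
          induction k using Fin.cases with
          | zero => simp only [Fin.cases_zero]; rw [hA0val]; exact hT1
          | succ k => simpa using hA'lo k
        · intro k hk
          induction k using Fin.cases with
          | zero => simp only [Fin.cases_zero]; rw [hA0val]; exact hT2
          | succ k =>
            simp only [Fin.cases_succ]
            exact hA'hi k (by simpa using hk)
      · -- run out of small goods: contradiction
        exfalso
        have hBvals : (∑ k : Fin (m+1), ∑ j ∈ B k, v j) ≤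
            ∑ j ∈ B 0, v j + m := by
          rw [Fin.sum_univ_succ]
          have hle : ∑ k : Fin m, ∑ j ∈ B k.succ, v j ≤ ∑ _k : Fin m, (1:ℝ) :=
            Finset.sum_le_sum fun k _ => hBval k.succ
          simp only [Finset.sum_const, Finset.card_univ, Fintype.card_fin,
            nsmul_eq_mul, mul_one] at hle
          linarith
        have hmt : ((m : ℝ) + 1) ≤ ∑ j ∈ M, v j := by push_cast at htot; linarith
        rw [hsum_split] at hmt
        linarith

/-- Bag-filling correctness (condition set 1): if `v(M) ≥ n`, the disjoint initial bags
`B k ⊆ M` each have value at most `1` and contain all items of absolute value at least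
`ε`, and all remaining (small) items satisfy `|v j| < ε`, then there is a partition
`A` of `M` extending the bags with every bundle of value at least `1 - ε`, and every
bundle except the last of value at most `1`. -/
theorem bag_filling_cond1 {ι : Type*} [DecidableEq ι] (v : ι → ℝ) (M : Finset ι)
    (n : ℕ) (hn : 1 ≤ n) (ε : ℝ) (hε : 0 < ε) (hε1 : ε < 1)
    (B : Fin n → Finset ι) (hBsub : ∀ k, B k ⊆ M)
    (hBdisj : ∀ k l, k ≠ l → Disjoint (B k) (B l))
    (hBval : ∀ k, ∑ j ∈ B k, v j ≤ 1)
    (hbig : ∀ j ∈ M, ε ≤ |v j| → ∃ k, j ∈ B k)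
    (hsmall : ∀ j ∈ M, (∀ k, j ∉ B k) → |v j| < ε)
    (htot : (n : ℝ) ≤ ∑ j ∈ M, v j) :
    ∃ A : Fin n → Finset ι, IsPartition M n A ∧ (∀ k, B k ⊆ A k) ∧
      (∀ k, 1 - ε ≤ ∑ j ∈ A k, v j) ∧
      (∀ k : Fin n, (k : ℕ) + 1 < n → ∑ j ∈ A k, v j ≤ 1) := by
  obtain ⟨A, hpart, hBA, hlo, hhi⟩ :=
    bag_aux v ε hε hε1 n hn M B hBsub hBdisj hBval hsmall htot
  exact ⟨A, hpart, hBA, hlo, hhi⟩
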